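/- Let n ≥ 1 and k ≥ 0 be integers and let a_1, …, a_k ∈ ℕ^n. Consider in the affine space ℂ^{n+k} the sets S(a) = {(t, t^{a_1}, …, t^{a_k}) : t ∈ ℂ^n with all coordinates t_j ≠ 0} and V(a) = {(y, y^{a_1}, …, y^{a_k}) : y ∈ ℂ^n}. Then the Zariski closure of S(a) equals V(a); that is, MvPolynomial.zeroLocus (MvPolynomial.vanishingIdeal S(a)) = V(a), where the vanishing ideal and zero locus are taken in the polynomial ring over ℂ in n + k variables acting on points of ℂ^{n+k}. -/

import Mathlib

open MvPolynomial

lemma eval_eq_aeval' {σ : Type*} (g : σ → ℂ) (r : MvPolynomial σ ℂ) :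
    MvPolynomial.eval g r = MvPolynomial.aeval g r := by
  rw [← coe_aeval_eq_eval]; rfl

lemma eq_zero_of_vanish_on_torus {n : ℕ} (q : MvPolynomial (Fin n) ℂ)
    (h : ∀ t : Fin n → ℂ, (∀ j, t j ≠ 0) → MvPolynomial.eval t q = 0) : q = 0 := by
  have hr : (∏ j, (X j : MvPolynomial (Fin n) ℂ)) * q = 0 := by
    apply MvPolynomial.funext
    intro t
    simp only [map_mul, map_prod, eval_X, map_zero]
    by_cases ht : ∀ j, t j ≠ 0
    · rw [h t ht, mul_zero]
    · push_neg at ht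
      obtain ⟨j, hj⟩ := ht
      rw [Finset.prod_eq_zero (Finset.mem_univ j) hj, zero_mul]
  have hX : (∏ j, (X j : MvPolynomial (Fin n) ℂ)) ≠ 0 :=
    Finset.prod_ne_zero_iff.mpr fun j _ => MvPolynomial.X_ne_zero j
  exact (mul_eq_zero.mp hr).resolve_left hX

/-- The Zariski closure of the monomial parametrization of the torus
`t ↦ (t, t^{a₁}, …, t^{a_k})` (all coordinates of `t` nonzero) in `ℂ^{n+k}`
is the full monomial variety `{(y, y^{a₁}, …, y^{a_k}) : y ∈ ℂⁿ}`. -/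
theorem zariski_closure_of_monomial_torus_chart
    (n k : ℕ) (hn : 0 < n) (a : Fin k → Fin n → ℕ) :
    MvPolynomial.zeroLocus ℂ (MvPolynomial.vanishingIdeal ℂ
      {z : Fin n ⊕ Fin k → ℂ | ∃ t : Fin n → ℂ, (∀ j, t j ≠ 0) ∧
        (∀ j, z (Sum.inl j) = t j) ∧ (∀ i, z (Sum.inr i) = ∏ j, t j ^ a i j)}) =
    {z : Fin n ⊕ Fin k → ℂ | ∃ y : Fin n → ℂ,
        (∀ j, z (Sum.inl j) = y j) ∧ (∀ i, z (Sum.inr i) = ∏ j, y j ^ a i j)} := by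
  set S : Set (Fin n ⊕ Fin k → ℂ) :=
    {z : Fin n ⊕ Fin k → ℂ | ∃ t : Fin n → ℂ, (∀ j, t j ≠ 0) ∧
        (∀ j, z (Sum.inl j) = t j) ∧ (∀ i, z (Sum.inr i) = ∏ j, t j ^ a i j)} with hS
  ext z
  constructor
  · intro hz
    -- each relation polynomial vanishes on S, hence at z
    refine ⟨fun j => z (Sum.inl j), fun j => rfl, fun i => ?_⟩
    have hp : (X (Sum.inr i) - ∏ j, X (Sum.inl j) ^ a i j :
        MvPolynomial (Fin n ⊕ Fin k) ℂ) ∈ MvPolynomial.vanishingIdeal ℂ S := by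
      rw [mem_vanishingIdeal_iff]
      rintro x ⟨t, _, h1, h2⟩
      simp [h1, h2]
    have := (mem_zeroLocus_iff.mp hz) _ hp
    simpa [sub_eq_zero] using this
  · rintro ⟨y, h1, h2⟩
    rw [mem_zeroLocus_iff]
    intro p hp
    rw [mem_vanishingIdeal_iff] at hp
    -- substitute the monomial parametrization into p
    set f : Fin n ⊕ Fin k → MvPolynomial (Fin n) ℂ :=
      Sum.elim (fun j => X j) (fun i => ∏ j, X j ^ a i j) with hf
    set q : MvPolynomial (Fin n) ℂ := aeval f p with hq
    have key : ∀ t : Fin n → ℂ, MvPolynomial.eval t q =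
        MvPolynomial.eval (fun s => MvPolynomial.eval t (f s)) p := by
      intro t
      rw [eval_eq_aeval', hq, comp_aeval_apply]
      simp only [eval_eq_aeval']
    have hq0 : q = 0 := by
      apply eq_zero_of_vanish_on_torus
      intro t ht
      rw [key t]
      apply hp
      refine ⟨t, ht, fun j => by simp [hf], fun i => by simp [hf]⟩
    have : MvPolynomial.eval y q = 0 := by rw [hq0]; simp
    rw [key y] at this
    have hzf : (fun s => MvPolynomial.eval y (f s)) = z := by
      funext s
      cases s with
      | inl j => simp [hf, h1 j]
      | inr i => simp [hf, h2 i]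
    rwa [hzf] at this
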